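/- Ochsenschläger's theorem (second part): let φ be the Thue–Morse morphism. For all k ≥ 1, φ^k(0) is not (k+1)-binomially equivalent to φ^k(1); more precisely, binom(φ^k(0), 0 1^k) − binom(φ^k(1), 0 1^k) = 2^{(k-1)(k-2)/2} for k ≥ 1. -/

import Mathlib

/-- Number of occurrences of the second word as a (scattered) subword of the first. -/
def binom {α : Type*} [DecidableEq α] : List α → List α → ℕ
  | _, [] => 1
  | [], _ :: _ => 0
  | a :: u, b :: v => binom u (b :: v) + if a = b then binom u v else 0

/-- k-binomial equivalence. -/
def BinEq (k : ℕ) (u v : List Bool) : Prop :=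
  ∀ x : List Bool, x.length ≤ k → binom u x = binom v x

/-- The Thue–Morse word: `tm n` is the parity of the number of ones
in the binary expansion of `n` (`false` plays the role of the letter 0). -/
def tm (n : ℕ) : Bool := (Nat.digits 2 n).count 1 % 2 == 1

/-- `u` occurs as a (contiguous) factor of the Thue–Morse word. -/
def isFactorTM (u : List Bool) : Prop :=
  ∃ i : ℕ, u = (List.range u.length).map (fun j => tm (i + j))

/-- The Thue–Morse morphism φ(0)=01, φ(1)=10, extended to words. -/
def phiW (w : List Bool) : List Bool :=
  w.flatMap (fun a => if a then [true, false] else [false, true])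

lemma binom_nil_right {α : Type*} [DecidableEq α] (u : List α) : binom u [] = 1 := by
  cases u <;> rfl

lemma binom_nil_left {α : Type*} [DecidableEq α] (b : α) (v : List α) :
    binom [] (b :: v) = 0 := rfl

lemma binom_cons {α : Type*} [DecidableEq α] (a b : α) (u v : List α) :
    binom (a :: u) (b :: v) = binom u (b :: v) + if a = b then binom u v else 0 := rfl

lemma binom_append {α : Type*} [DecidableEq α] (u v x : List α) :
    binom (u ++ v) x =
      ∑ i ∈ Finset.range (x.length + 1), binom u (x.take i) * binom v (x.drop i) := by
  induction u generalizing x with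
  | nil =>
    cases x with
    | nil => simp [binom_nil_right]
    | cons b y =>
      rw [Finset.sum_range_succ']
      simp [binom_nil_left, binom_nil_right]
  | cons a u ih =>
    cases x with
    | nil => simp [binom_nil_right]
    | cons b y =>
      have h1 : binom ((a :: u) ++ v) (b :: y) =
          binom (u ++ v) (b :: y) + if a = b then binom (u ++ v) y else 0 := rfl
      rw [h1, ih, ih]
      rw [Finset.sum_range_succ' (fun i => binom u ((b :: y).take i) * binom v ((b :: y).drop i)),
        Finset.sum_range_succ'
          (fun i => binom (a :: u) ((b :: y).take i) * binom v ((b :: y).drop i))]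
      simp only [List.take_succ_cons, List.drop_succ_cons, List.take_zero, List.drop_zero,
        binom_nil_right, one_mul, binom_cons, add_mul, Finset.sum_add_distrib]
      split_ifs with h
      · simp [Finset.mul_sum]
        ring
      · simp

lemma binom_replicate {α : Type*} [DecidableEq α] (w : List α) (b : α) (j : ℕ) :
    binom w (List.replicate j b) = (w.count b).choose j := by
  induction w generalizing j with
  | nil =>
    cases j with
    | zero => simp [binom_nil_right]
    | succ m => simp [List.replicate_succ, binom, Nat.choose_eq_zero_of_lt]
  | cons a w ih =>
    cases j with
    | zero => simp [binom_nil_right]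
    | succ m =>
      rw [List.replicate_succ]
      show binom w (b :: List.replicate m b) + (if a = b then binom w (List.replicate m b) else 0)
          = _
      rw [← List.replicate_succ, ih, ih, List.count_cons]
      by_cases h : a = b
      · simp only [h, if_pos, beq_self_eq_true, if_true, Nat.choose_succ_succ,
          Nat.succ_eq_add_one]
        omega
      · have h2 : ¬ (a == b) = true := by simpa using h
        simp [h, h2]

lemma phiW_append (u v : List Bool) : phiW (u ++ v) = phiW u ++ phiW v :=
  List.flatMap_append

lemma phiW_iter_append (k : ℕ) (u v : List Bool) :
    phiW^[k] (u ++ v) = phiW^[k] u ++ phiW^[k] v := by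
  induction k generalizing u v with
  | zero => simp
  | succ m ih => simp [Function.iterate_succ_apply, phiW_append, ih]

lemma phiW_iter_split (k : ℕ) :
    phiW^[k+1] [false] = phiW^[k] [false] ++ phiW^[k] [true] ∧
    phiW^[k+1] [true] = phiW^[k] [true] ++ phiW^[k] [false] := by
  constructor
  · rw [Function.iterate_succ_apply,
      show phiW [false] = [false] ++ [true] from rfl, phiW_iter_append]
  · rw [Function.iterate_succ_apply,
      show phiW [true] = [true] ++ [false] from rfl, phiW_iter_append]

lemma count_phiW (w : List Bool) (b : Bool) : (phiW w).count b = w.length := by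
  induction w with
  | nil => rfl
  | cons a w ih =>
    have : phiW (a :: w) = (if a then [true, false] else [false, true]) ++ phiW w := rfl
    rw [this, List.count_append, ih]
    cases a <;> cases b <;> simp <;> omega

lemma length_iter (k : ℕ) (b : Bool) : (phiW^[k] [b]).length = 2 ^ k := by
  induction k with
  | zero => simp
  | succ m ih =>
    rw [Function.iterate_succ_apply']
    have : ∀ w : List Bool, (phiW w).length = 2 * w.length := by
      intro w; induction w with
      | nil => rfl
      | cons a w ih2 =>
        have : phiW (a :: w) = (if a then [true, false] else [false, true]) ++ phiW w := rfl
        rw [this, List.length_append, ih2]; cases a <;> simp <;> ring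
    rw [this, ih]; ring

lemma count_iter (k : ℕ) (b c : Bool) (hk : 1 ≤ k) :
    (phiW^[k] [b]).count c = 2 ^ (k - 1) := by
  obtain ⟨m, rfl⟩ : ∃ m, k = m + 1 := ⟨k - 1, (Nat.succ_pred_eq_of_pos hk).symm⟩
  rw [Function.iterate_succ_apply', count_phiW, length_iter]
  simp

lemma binom_split (u v : List Bool) (j : ℕ) :
    binom (u ++ v) (false :: List.replicate j true)
      = binom v (false :: List.replicate j true)
        + ∑ i ∈ Finset.range (j + 1),
            binom u (false :: List.replicate i true) * ((v.count true).choose (j - i)) := by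
  rw [binom_append]
  have hlen : (false :: List.replicate j true).length = j + 1 := by simp
  rw [hlen, Finset.sum_range_succ']
  simp only [List.take_zero, List.drop_zero, binom_nil_right, one_mul,
    List.take_succ_cons, List.drop_succ_cons, List.take_replicate, List.drop_replicate]
  rw [add_comm]
  congr 1
  apply Finset.sum_congr rfl
  intro i hi
  have : min i j = i := by simp at hi; omega
  rw [this, binom_replicate]

lemma main_ind (k : ℕ) (hk : 1 ≤ k) :
    (∀ j < k, binom (phiW^[k] [false]) (false :: List.replicate j true)
        = binom (phiW^[k] [true]) (false :: List.replicate j true)) ∧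
    binom (phiW^[k] [false]) (false :: List.replicate k true)
      = binom (phiW^[k] [true]) (false :: List.replicate k true) + 2 ^ Nat.choose (k - 1) 2 := by
  induction k, hk using Nat.le_induction with
  | base =>
    constructor
    · intro j hj
      interval_cases j
      decide
    · decide
  | succ k hk ih =>
    obtain ⟨ih1, ih2⟩ := ih
    have hcF : (phiW^[k] [false]).count true = 2 ^ (k - 1) := count_iter k false true hk
    have hcT : (phiW^[k] [true]).count true = 2 ^ (k - 1) := count_iter k true true hk
    have hu : ∀ j, binom (phiW^[k+1] [false]) (false :: List.replicate j true)
        = binom (phiW^[k] [true]) (false :: List.replicate j true)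
          + ∑ i ∈ Finset.range (j + 1),
              binom (phiW^[k] [false]) (false :: List.replicate i true)
                * ((2 ^ (k - 1)).choose (j - i)) := by
      intro j; rw [(phiW_iter_split k).1, binom_split, hcT]
    have hv : ∀ j, binom (phiW^[k+1] [true]) (false :: List.replicate j true)
        = binom (phiW^[k] [false]) (false :: List.replicate j true)
          + ∑ i ∈ Finset.range (j + 1),
              binom (phiW^[k] [true]) (false :: List.replicate i true)
                * ((2 ^ (k - 1)).choose (j - i)) := by
      intro j; rw [(phiW_iter_split k).2, binom_split, hcF]
    constructor
    · intro j hj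
      rw [hu, hv]
      rcases Nat.lt_or_ge j k with h | h
      · rw [ih1 j h]
        congr 1
        apply Finset.sum_congr rfl
        intro i hi
        rw [ih1 i (by simp at hi; omega)]
      · have hjk : j = k := by omega
        rw [hjk, Finset.sum_range_succ, Finset.sum_range_succ]
        have e1 : ∑ i ∈ Finset.range k,
              binom (phiW^[k] [false]) (false :: List.replicate i true)
                * ((2 ^ (k - 1)).choose (k - i))
            = ∑ i ∈ Finset.range k,
              binom (phiW^[k] [true]) (false :: List.replicate i true)
                * ((2 ^ (k - 1)).choose (k - i)) := by
          apply Finset.sum_congr rfl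
          intro i hi
          rw [ih1 i (Finset.mem_range.mp hi)]
        rw [e1, ih2]
        simp only [Nat.sub_self, Nat.choose_zero_right, mul_one]
        omega
    · rw [hu, hv]
      rw [Finset.sum_range_succ, Finset.sum_range_succ, Finset.sum_range_succ,
        Finset.sum_range_succ]
      have e1 : ∑ i ∈ Finset.range k,
            binom (phiW^[k] [false]) (false :: List.replicate i true)
              * ((2 ^ (k - 1)).choose (k + 1 - i))
          = ∑ i ∈ Finset.range k,
            binom (phiW^[k] [true]) (false :: List.replicate i true)
              * ((2 ^ (k - 1)).choose (k + 1 - i)) := by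
        apply Finset.sum_congr rfl
        intro i hi
        rw [ih1 i (Finset.mem_range.mp hi)]
      have h1 : k + 1 - k = 1 := by omega
      rw [e1, ih2, h1]
      simp only [Nat.sub_self, Nat.choose_zero_right, mul_one, Nat.choose_one_right]
      have hexp : 2 ^ ((k - 1).choose 2) * 2 ^ (k - 1) = 2 ^ ((k + 1 - 1).choose 2) := by
        rw [← pow_add]
        congr 1
        obtain ⟨m, rfl⟩ : ∃ m, k = m + 1 := ⟨k - 1, (Nat.succ_pred_eq_of_pos hk).symm⟩
        simp only [Nat.add_sub_cancel]
        rw [Nat.choose_succ_succ m 1, Nat.choose_one_right]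
        exact Nat.add_comm _ _
      rw [add_mul, hexp]
      omega

theorem ochsenschlaeger_second (k : ℕ) (hk : 1 ≤ k) :
    ¬ BinEq (k + 1) (phiW^[k] [false]) (phiW^[k] [true]) ∧
    binom (phiW^[k] [false]) (false :: List.replicate k true) =
      binom (phiW^[k] [true]) (false :: List.replicate k true) +
        2 ^ ((k - 1) * (k - 2) / 2) := by
  have h := (main_ind k hk).2
  have hexp : (k - 1).choose 2 = (k - 1) * (k - 2) / 2 := by
    rw [Nat.choose_two_right, show k - 1 - 1 = k - 2 from by omega]
  rw [hexp] at h
  refine ⟨fun hbe => ?_, h⟩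
  have := hbe (false :: List.replicate k true) (by simp)
  have hpos : 0 < 2 ^ ((k - 1) * (k - 2) / 2) := Nat.pow_pos (by norm_num)
  omega
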